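/- arXiv:1810.10688 — 2 statements merged into one kernel-verified Lean document; each statement's English description precedes it below -/
import Mathlib

section
/- Let n ≥ 2. There exists ρ₀ ∈ (0, 1/2), depending only on n, such that for every ρ ∈ (0, ρ₀] the function w(x) := (1/2)·xₙ/(−log xₙ) + |x'|² xₙ^{1/n}, defined for 0 < xₙ < 1, satisfies det D²w(x) > 1 at every point x of the ball Ω := B(ρ eₙ, ρ), and w(x) ≤ xₙ/(−log xₙ) at every point x ∈ ∂Ω with xₙ > 0. -/
open scoped RealInnerProductSpace
open Metric Set MeasureTheory

noncomputable section

set_option linter.unusedVariables false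

/-- The determinant of the Hessian `D²u` at `x`. -/
def mongeDet {n : ℕ} (u : EuclideanSpace ℝ (Fin n) → ℝ) (x : EuclideanSpace ℝ (Fin n)) : ℝ :=
  (Matrix.of fun i j : Fin n =>
    iteratedFDeriv ℝ 2 u x ![EuclideanSpace.single i 1, EuclideanSpace.single j 1]).det

/-- The last coordinate `xₙ` of a point `x ∈ ℝⁿ`. -/
def lastC {n : ℕ} (hn : 2 ≤ n) (x : EuclideanSpace ℝ (Fin n)) : ℝ := x ⟨n - 1, by omega⟩

/-- The projection `x ↦ x'` onto the first `n-1` coordinates. -/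
def projE {n : ℕ} (x : EuclideanSpace ℝ (Fin n)) : EuclideanSpace ℝ (Fin (n - 1)) :=
  WithLp.toLp 2 fun i => x (Fin.castLE (Nat.sub_le n 1) i)

/-- The embedding `x' ↦ (x', 0)` of `ℝⁿ⁻¹` into `ℝⁿ`. -/
def embE {n : ℕ} (x' : EuclideanSpace ℝ (Fin (n - 1))) : EuclideanSpace ℝ (Fin n) :=
  WithLp.toLp 2 fun j => if h : (j : ℕ) < n - 1 then x' ⟨j, h⟩ else 0

/-- The section `S_h(y)` of `u` at an interior point `y` with height `h`. -/
def sectU {n : ℕ} (Ω : Set (EuclideanSpace ℝ (Fin n))) (u : EuclideanSpace ℝ (Fin n) → ℝ)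
    (y : EuclideanSpace ℝ (Fin n)) (h : ℝ) : Set (EuclideanSpace ℝ (Fin n)) :=
  {x ∈ closure Ω | u x < u y + ⟪gradient u y, x - y⟫ + h}


section BarrierAux
open Real EuclideanSpace
def ff (t : ℝ) : ℝ := (1/2) * (t / (-Real.log t))
def ff1 (t : ℝ) : ℝ := (1/2) * ((1 - Real.log t) / (Real.log t)^2)
def ff2 (t : ℝ) : ℝ := (1/(2*t)) * (1/(Real.log t)^2 - 2/(Real.log t)^3)
def gg (p t : ℝ) : ℝ := t ^ p
def gg1 (p t : ℝ) : ℝ := p * t ^ (p-1)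
def gg2 (p t : ℝ) : ℝ := p * (p-1) * t ^ (p-2)

lemma hff1 {t : ℝ} (ht : 0 < t) (ht1 : t < 1) : HasDerivAt ff (ff1 t) t := by
  have hl : Real.log t < 0 := Real.log_neg ht ht1
  have hl0 : Real.log t ≠ 0 := ne_of_lt hl
  have h := ((hasDerivAt_id t).div ((Real.hasDerivAt_log (ne_of_gt ht)).neg) (by simpa using hl0)).const_mul (1/2 : ℝ)
  refine h.congr_deriv ?_
  simp only [ff1, id, Pi.neg_apply]
  field_simp [ff1]
  ring

lemma hff2 {t : ℝ} (ht : 0 < t) (ht1 : t < 1) : HasDerivAt ff1 (ff2 t) t := by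
  have hl : Real.log t < 0 := Real.log_neg ht ht1
  have hl0 : Real.log t ≠ 0 := ne_of_lt hl
  have h := (((Real.hasDerivAt_log (ne_of_gt ht)).const_sub 1).div ((Real.hasDerivAt_log (ne_of_gt ht)).pow 2) (pow_ne_zero 2 hl0)).const_mul (1/2:ℝ)
  refine h.congr_deriv ?_
  simp only [ff2, Pi.pow_apply]
  field_simp [ff2]
  ring

lemma hgg1 {p t : ℝ} (ht : 0 < t) : HasDerivAt (gg p) (gg1 p t) t :=
  Real.hasDerivAt_rpow_const (Or.inl (ne_of_gt ht))

lemma hgg2 {p t : ℝ} (ht : 0 < t) : HasDerivAt (gg1 p) (gg2 p t) t := by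
  have h := (Real.hasDerivAt_rpow_const (p := p - 1) (Or.inl (ne_of_gt ht))).const_mul p
  refine h.congr_deriv ?_
  rw [gg2, show p - 1 - 1 = p - 2 by ring]
  ring


variable (m : ℕ) (p : ℝ)

abbrev E (m : ℕ) := EuclideanSpace ℝ (Fin (m+1))
def kk (m : ℕ) : Fin (m+1) := Fin.last m
def SS (z : E m) : ℝ := ∑ i : Fin m, (z i.castSucc)^2
def W (z : E m) : ℝ := ff (z (kk m)) + SS m z * gg p (z (kk m))
def Q : E m →L[ℝ] E m →L[ℝ] ℝ :=
  ∑ i : Fin m, (EuclideanSpace.proj i.castSucc).smulRight (EuclideanSpace.proj (i.castSucc : Fin (m+1)))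
def LL (x : E m) : E m →L[ℝ] ℝ :=
  (ff1 (x (kk m)) + SS m x * gg1 p (x (kk m))) • (EuclideanSpace.proj (kk m)) + (2 * gg p (x (kk m))) • (Q m x)

lemma Q_apply (u v : E m) : Q m u v = ∑ i : Fin m, u i.castSucc * v i.castSucc := by
  simp [Q, ContinuousLinearMap.sum_apply, mul_comm]

lemma hasFDerivAt_SS (x : E m) : HasFDerivAt (SS m) ((2:ℝ) • Q m x) x := by
  have h : HasFDerivAt (SS m)
      (∑ i : Fin m, (2 * x i.castSucc) • (EuclideanSpace.proj (𝕜 := ℝ) (i.castSucc : Fin (m+1)))) x := by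
    apply HasFDerivAt.fun_sum
    intro i _
    have h0 : HasFDerivAt (fun z : E m => (z i.castSucc : ℝ))
        (EuclideanSpace.proj (i.castSucc : Fin (m+1)) : E m →L[ℝ] ℝ) x :=
      (EuclideanSpace.proj (i.castSucc : Fin (m+1)) : E m →L[ℝ] ℝ).hasFDerivAt
    simpa [pow_two, two_mul, add_smul] using h0.fun_mul h0
  convert h using 1
  ext v
  rw [ContinuousLinearMap.smul_apply, ContinuousLinearMap.sum_apply, Q_apply, smul_eq_mul,
    Finset.mul_sum]
  refine Finset.sum_congr rfl fun i _ => ?_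
  rw [ContinuousLinearMap.smul_apply, smul_eq_mul]
  show 2 * (x i.castSucc * v i.castSucc) = (2 * x i.castSucc) * (v i.castSucc)
  ring

lemma hasFDerivAt_W (x : E m) (hx0 : 0 < x (kk m)) (hx1 : x (kk m) < 1) :
    HasFDerivAt (W m p) (LL m p x) x := by
  have hπ : HasFDerivAt (fun z : E m => (z (kk m) : ℝ))
      (EuclideanSpace.proj (kk m) : E m →L[ℝ] ℝ) x :=
    (EuclideanSpace.proj (kk m) : E m →L[ℝ] ℝ).hasFDerivAt
  have h1 : HasFDerivAt (fun z : E m => ff (z (kk m)))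
      (ff1 (x (kk m)) • (EuclideanSpace.proj (kk m) : E m →L[ℝ] ℝ)) x :=
    (hff1 hx0 hx1).comp_hasFDerivAt (h₂ := ff) x hπ
  have hg : HasFDerivAt (fun z : E m => gg p (z (kk m)))
      (gg1 p (x (kk m)) • (EuclideanSpace.proj (kk m) : E m →L[ℝ] ℝ)) x :=
    (hgg1 hx0).comp_hasFDerivAt (h₂ := gg p) x hπ
  have h := h1.add ((hasFDerivAt_SS m x).mul hg)
  refine h.congr_fderiv ?_
  ext v
  simp only [LL, ContinuousLinearMap.add_apply, ContinuousLinearMap.smul_apply, smul_eq_mul]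
  ring

def pik (m : ℕ) : E m →L[ℝ] ℝ := EuclideanSpace.proj (kk m)

lemma hasFDerivAt_LL (x : E m) (hx0 : 0 < x (kk m)) (hx1 : x (kk m) < 1) :
    HasFDerivAt (LL m p)
      (((ff1 (x (kk m)) + SS m x * gg1 p (x (kk m))) • (0 : E m →L[ℝ] E m →L[ℝ] ℝ) +
          ((ff2 (x (kk m)) • pik m +
            (SS m x • (gg2 p (x (kk m)) • pik m) + gg1 p (x (kk m)) • ((2:ℝ) • Q m x)))).smulRight (pik m)) +
        ((2 * gg p (x (kk m))) • (Q m : E m →L[ℝ] E m →L[ℝ] ℝ) +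
          ((2:ℝ) • (gg1 p (x (kk m)) • pik m)).smulRight (Q m x))) x := by
  have hπ : HasFDerivAt (fun z : E m => (z (kk m) : ℝ)) (pik m) x :=
    (pik m).hasFDerivAt
  have hα : HasFDerivAt (fun z : E m => ff1 (z (kk m)) + SS m z * gg1 p (z (kk m)))
      (ff2 (x (kk m)) • pik m +
        (SS m x • (gg2 p (x (kk m)) • pik m) + gg1 p (x (kk m)) • ((2:ℝ) • Q m x))) x :=
    ((hff2 hx0 hx1).comp_hasFDerivAt (h₂ := ff1) x hπ).add
      ((hasFDerivAt_SS m x).mul ((hgg2 hx0).comp_hasFDerivAt (h₂ := gg1 p) x hπ))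
  have hβ : HasFDerivAt (fun z : E m => 2 * gg p (z (kk m)))
      ((2:ℝ) • (gg1 p (x (kk m)) • pik m)) x :=
    ((hgg1 hx0).comp_hasFDerivAt (h₂ := gg p) x hπ).const_mul 2
  have h1 := hα.smul (hasFDerivAt_const (pik m) x)
  have h2 := hβ.smul (Q m).hasFDerivAt
  exact h1.add h2

lemma pik_single (i : Fin (m+1)) :
    pik m (EuclideanSpace.single i (1:ℝ)) = if i = kk m then 1 else 0 := by
  show (EuclideanSpace.single i (1:ℝ)) (kk m) = _
  rw [EuclideanSpace.single_apply]
  simp [eq_comm]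

lemma Qx_single (x : E m) (i : Fin (m+1)) :
    Q m x (EuclideanSpace.single i (1:ℝ)) = if i = kk m then 0 else x i := by
  rw [Q_apply]
  by_cases hik : i = kk m
  · simp only [hik, if_pos rfl]
    refine Finset.sum_eq_zero fun r _ => ?_
    rw [EuclideanSpace.single_apply, if_neg, mul_zero]
    exact fun h => absurd (h ▸ rfl : r.castSucc = kk m) (ne_of_lt (Fin.castSucc_lt_last r))
  · rw [if_neg hik]
    have hlt : i < Fin.last m := lt_of_le_of_ne (Fin.le_last i) hik
    rw [Finset.sum_eq_single (i.castPred (ne_of_lt hlt))]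
    · rw [Fin.castSucc_castPred, EuclideanSpace.single_apply, if_pos rfl, mul_one]
    · intro r _ hr
      rw [EuclideanSpace.single_apply, if_neg, mul_zero]
      intro h
      exact hr (by
        apply Fin.castSucc_injective
        rw [Fin.castSucc_castPred, h])
    · intro h
      exact absurd (Finset.mem_univ _) h

lemma Qss_single (i j : Fin (m+1)) :
    Q m (EuclideanSpace.single i (1:ℝ)) (EuclideanSpace.single j (1:ℝ)) =
      if i = j ∧ ¬ i = kk m then 1 else 0 := by
  rw [Q_apply]
  by_cases hik : i = kk m
  · subst hik
    rw [if_neg (by simp)]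
    refine Finset.sum_eq_zero fun r _ => ?_
    rw [EuclideanSpace.single_apply (i := kk m), if_neg, zero_mul]
    exact fun h => absurd h (ne_of_lt (Fin.castSucc_lt_last r))
  · have hlt : i < Fin.last m := lt_of_le_of_ne (Fin.le_last i) hik
    rw [Finset.sum_eq_single (i.castPred (ne_of_lt hlt))]
    · rw [Fin.castSucc_castPred, EuclideanSpace.single_apply, if_pos rfl,
        EuclideanSpace.single_apply, one_mul]
      by_cases hij : i = j
      · rw [if_pos hij, if_pos ⟨hij, hik⟩]
      · rw [if_neg hij, if_neg (fun h => hij h.1)]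
    · intro r _ hr
      rw [EuclideanSpace.single_apply (i := i), if_neg, zero_mul]
      intro h
      exact hr (by
        apply Fin.castSucc_injective
        rw [Fin.castSucc_castPred, h])
    · intro h
      exact absurd (Finset.mem_univ _) h

def Hmat (x : E m) : Matrix (Fin (m+1)) (Fin (m+1)) ℝ := Matrix.of fun i j =>
  if i = kk m then
    (if j = kk m then ff2 (x (kk m)) + SS m x * gg2 p (x (kk m)) else 2 * gg1 p (x (kk m)) * x j)
  else if j = kk m then 2 * gg1 p (x (kk m)) * x i
  else if i = j then 2 * gg p (x (kk m)) else 0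

lemma entry_eq (x : E m) (hx0 : 0 < x (kk m)) (hx1 : x (kk m) < 1) (i j : Fin (m+1)) :
    iteratedFDeriv ℝ 2 (W m p) x
      ![EuclideanSpace.single i 1, EuclideanSpace.single j 1] = Hmat m p x i j := by
  rw [iteratedFDeriv_two_apply]
  have hU : IsOpen {z : E m | 0 < z (kk m) ∧ z (kk m) < 1} := by
    have : {z : E m | 0 < z (kk m) ∧ z (kk m) < 1} = (pik m) ⁻¹' (Set.Ioo 0 1) := rfl
    rw [this]
    exact isOpen_Ioo.preimage (pik m).continuous
  have hfd : fderiv ℝ (W m p) =ᶠ[nhds x] LL m p := by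
    filter_upwards [hU.mem_nhds ⟨hx0, hx1⟩] with z hz
    exact (hasFDerivAt_W m p z hz.1 hz.2).fderiv
  rw [hfd.fderiv_eq, (hasFDerivAt_LL m p x hx0 hx1).fderiv]
  simp only [Matrix.cons_val_zero, Matrix.cons_val_one, Matrix.head_cons,
    ContinuousLinearMap.add_apply, ContinuousLinearMap.smul_apply,
    ContinuousLinearMap.smulRight_apply, ContinuousLinearMap.zero_apply,
    pik_single, Qx_single, Qss_single, smul_eq_mul, Hmat, Matrix.of_apply]
  by_cases hik : i = kk m <;> by_cases hjk : j = kk m <;>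
      simp only [hik, hjk, if_pos rfl, reduceIte, EuclideanSpace.single_apply, if_true,
        if_false] <;>
    try ring
  by_cases hij : i = j
  · subst hij
    rw [if_pos rfl, if_pos rfl]
    ring
  · rw [if_neg (fun h : j = i => hij h.symm), if_neg hij]
    ring

lemma det_Hmat (x : E m) (hg : gg p (x (kk m)) ≠ 0) :
    (Hmat m p x).det = (2 * gg p (x (kk m)))^m *
      (ff2 (x (kk m)) + SS m x * gg2 p (x (kk m)) -
        (2 * gg1 p (x (kk m)))^2 * SS m x / (2 * gg p (x (kk m)))) := by
  classical
  set a := 2 * gg p (x (kk m)) with ha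
  set b := 2 * gg1 p (x (kk m)) with hb
  have ha0 : a ≠ 0 := by simp [ha, hg]
  set A : Matrix (Fin m) (Fin m) ℝ := a • (1 : Matrix (Fin m) (Fin m) ℝ) with hA
  set B : Matrix (Fin m) (Fin 1) ℝ := Matrix.of (fun r _ => b * x r.castSucc) with hB
  set C : Matrix (Fin 1) (Fin m) ℝ := Matrix.of (fun _ r => b * x r.castSucc) with hC
  set D : Matrix (Fin 1) (Fin 1) ℝ :=
    Matrix.of (fun _ _ => ff2 (x (kk m)) + SS m x * gg2 p (x (kk m))) with hD
  have hlast : (finSumFinEquiv (Sum.inr 0 : Fin m ⊕ Fin 1)) = kk m := by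
    apply Fin.ext
    simp [kk]
  have hcast : ∀ r : Fin m, (finSumFinEquiv (Sum.inl r : Fin m ⊕ Fin 1)) = r.castSucc := by
    intro r
    apply Fin.ext
    simp
  have hne : ∀ r : Fin m, (r.castSucc : Fin (m+1)) ≠ kk m :=
    fun r => ne_of_lt (Fin.castSucc_lt_last r)
  have hsub : (Hmat m p x).submatrix finSumFinEquiv finSumFinEquiv =
      Matrix.fromBlocks A B C D := by
    ext i j
    rcases i with r | i1 <;> rcases j with s | j1
    · simp only [Matrix.submatrix_apply, hcast, Matrix.fromBlocks_apply₁₁, Hmat, Matrix.of_apply,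
        if_neg (hne r), if_neg (hne s), hA, Matrix.smul_apply, Matrix.one_apply, smul_eq_mul]
      by_cases hrs : r = s
      · subst hrs; simp [ha]
      · rw [if_neg (fun h => hrs (Fin.castSucc_injective m h)), if_neg hrs, mul_zero]
    · obtain rfl : j1 = 0 := Subsingleton.elim _ _
      simp only [Matrix.submatrix_apply, hcast, hlast, Matrix.fromBlocks_apply₁₂, Hmat,
        Matrix.of_apply, if_neg (hne r), if_pos rfl, hB]
      simp [hb]
    · obtain rfl : i1 = 0 := Subsingleton.elim _ _
      simp only [Matrix.submatrix_apply, hcast, hlast, Matrix.fromBlocks_apply₂₁, Hmat,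
        Matrix.of_apply, if_pos rfl, if_neg (hne s), hC]
      simp [hb]
    · obtain rfl : i1 = 0 := Subsingleton.elim _ _
      obtain rfl : j1 = 0 := Subsingleton.elim _ _
      simp only [Matrix.submatrix_apply, hlast, Matrix.fromBlocks_apply₂₂, Hmat,
        Matrix.of_apply, if_pos rfl, hD]
      simp
  have hAinv : A * (a⁻¹ • (1 : Matrix (Fin m) (Fin m) ℝ)) = 1 := by
    rw [hA, Matrix.smul_mul, Matrix.mul_smul, one_mul, smul_smul, mul_inv_cancel₀ ha0, one_smul]
  haveI : Invertible A := invertibleOfRightInverse _ _ hAinv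
  have hinv : ⅟A = a⁻¹ • (1 : Matrix (Fin m) (Fin m) ℝ) := invOf_eq_right_inv hAinv
  have hdet : (Hmat m p x).det = (Matrix.fromBlocks A B C D).det := by
    rw [← hsub, Matrix.det_submatrix_equiv_self]
  rw [hdet, Matrix.det_fromBlocks₁₁, hinv]
  have h1 : Matrix.det A = a ^ m := by
    rw [hA, Matrix.det_smul, Matrix.det_one, mul_one, Fintype.card_fin]
  have hs : ∑ r : Fin m, (b * x r.castSucc) * (b * x r.castSucc) = b^2 * SS m x := by
    rw [SS, Finset.mul_sum]
    exact Finset.sum_congr rfl fun r _ => by ring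
  have h2 : (D - C * (a⁻¹ • (1 : Matrix (Fin m) (Fin m) ℝ)) * B).det =
      ff2 (x (kk m)) + SS m x * gg2 p (x (kk m)) - b^2 * SS m x / a := by
    rw [Matrix.det_fin_one, Matrix.sub_apply, Matrix.mul_smul, Matrix.mul_one, Matrix.smul_mul,
      Matrix.smul_apply, Matrix.mul_apply]
    simp only [hB, hC, hD, Matrix.of_apply, smul_eq_mul]
    rw [hs, div_eq_inv_mul]
  rw [h1, h2]

lemma interior_est (m : ℕ) (hm : 1 ≤ m) (p t S : ℝ) (hp0 : 0 < p) (hp2 : p ≤ 1/2)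
    (hpm : p * m = 1 - p)
    (ht0 : 0 < t) (hte : t ≤ Real.exp (-1))
    (hA : 3 * (Real.log t)^2 * t ^ p < 1) (hS0 : 0 ≤ S) (hSt : S ≤ t) :
    1 < (2 * gg p t)^m *
      (ff2 t + S * gg2 p t - (2 * gg1 p t)^2 * S / (2 * gg p t)) := by
  have hL1 : 1 ≤ -Real.log t := by
    have := Real.log_le_log ht0 hte
    rw [Real.log_exp] at this
    linarith
  set L : ℝ := -Real.log t with hL
  have hL0 : 0 < L := lt_of_lt_of_le one_pos hL1
  have htp : (0:ℝ) < t ^ p := Real.rpow_pos_of_pos ht0 _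
  have hlog2 : (Real.log t)^2 = L^2 := by rw [hL]; ring
  have hlog3 : (Real.log t)^3 = -L^3 := by rw [hL]; ring
  have hff2 : 1/(2*t) * (1/L^2) ≤ ff2 t := by
    rw [ff2, hlog2, hlog3]
    have h2 : (0:ℝ) ≤ 2 / L^3 := by positivity
    have h3 : 1/L^2 ≤ 1/L^2 - 2/(-L^3) := by
      rw [div_neg]
      linarith
    have hpos : (0:ℝ) < 1/(2*t) := by positivity
    nlinarith
  have hcorr : S * gg2 p t - (2 * gg1 p t)^2 * S / (2 * gg p t) = -(S * (p*(1+p)) * t^(p-2)) := by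
    have h1 : t ^ ((p-1) * ((2:ℕ):ℝ)) = t^(p-2) * t^p := by
      rw [← Real.rpow_add ht0]
      congr 1
      push_cast
      ring
    rw [gg, gg1, gg2, show (2*(p*t^(p-1)))^2 = 4*p^2*(t^(p-1))^2 by ring,
      ← Real.rpow_natCast (t^(p-1)) 2, ← Real.rpow_mul ht0.le, h1]
    have h2 : (0:ℝ) < t^p := htp
    field_simp
    ring
  have hppbound : p * (1+p) ≤ 1 := by
    nlinarith [mul_le_mul_of_nonneg_left hp2 hp0.le]
  have h2 : (0:ℝ) < t^(p-2) := Real.rpow_pos_of_pos ht0 _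
  have hbr : ff2 t - S * t^(p-2) ≤
      ff2 t + S * gg2 p t - (2 * gg1 p t)^2 * S / (2 * gg p t) := by
    rw [sub_eq_add_neg, add_sub_assoc, hcorr]
    nlinarith [mul_le_mul_of_nonneg_left hppbound (mul_nonneg hS0 h2.le)]
  have hSt2 : S * t^(p-2) ≤ t^(p-1) := by
    calc S * t^(p-2) ≤ t * t^(p-2) := by nlinarith
    _ = t^(p-1) := by
      rw [show p - 1 = 1 + (p-2) by ring, Real.rpow_add ht0, Real.rpow_one]
  have hB : ff2 t - t^(p-1) ≤
      ff2 t + S * gg2 p t - (2 * gg1 p t)^2 * S / (2 * gg p t) := by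
    linarith
  have hpref : (2 * gg p t)^m = 2^m * t^(1-p) := by
    rw [gg, mul_pow, ← Real.rpow_natCast (t^p) m, ← Real.rpow_mul (le_of_lt ht0), hpm]
  have htp1 : (0:ℝ) < t^(1-p) := Real.rpow_pos_of_pos ht0 _
  have hkey : 2 * t^(1-p) * (ff2 t - t^(p-1)) ≥ t^(-p)/L^2 - 2 := by
    have e1 : t^(1-p) * (1/(2*t) * (1/L^2)) = t^(-p)/L^2 / 2 := by
      rw [show (1:ℝ)-p = -p + 1 by ring, Real.rpow_add ht0, Real.rpow_one]
      field_simp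
    have e2 : t^(1-p) * t^(p-1) = 1 := by
      rw [← Real.rpow_add ht0]
      norm_num
    have h3 : t^(-p)/L^2/2 ≤ t^(1-p) * ff2 t := by
      rw [← e1]
      exact mul_le_mul_of_nonneg_left hff2 (le_of_lt htp1)
    have expand : 2 * t^(1-p) * (ff2 t - t^(p-1)) =
        2 * (t^(1-p) * ff2 t) - 2 * (t^(1-p) * t^(p-1)) := by ring
    rw [ge_iff_le, expand, e2]
    linarith
  have hA' : 3 < t^(-p)/L^2 := by
    rw [hlog2] at hA
    have hL2 : (0:ℝ) < L^2 := by positivity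
    rw [lt_div_iff₀ hL2, Real.rpow_neg ht0.le]
    calc 3 * L^2 = 3 * L^2 * t^p * (t^p)⁻¹ := by field_simp
    _ < 1 * (t^p)⁻¹ := mul_lt_mul_of_pos_right hA (inv_pos.mpr htp)
    _ = (t^p)⁻¹ := one_mul _
  have hstep1 : 1 < 2 * t^(1-p) * (ff2 t - t^(p-1)) := by linarith
  have hB'pos : 0 < ff2 t - t^(p-1) := by
    by_contra h
    push_neg at h
    nlinarith
  have h2m : (2:ℝ) ≤ 2^m := by
    calc (2:ℝ) = 2^1 := (pow_one 2).symm
    _ ≤ 2^m := pow_le_pow_right₀ (by norm_num) hm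
  have h2mpos : (0:ℝ) < 2^m := by positivity
  rw [hpref]
  have hstep2 : 2 * t^(1-p) * (ff2 t - t^(p-1)) ≤ 2^m * t^(1-p) * (ff2 t - t^(p-1)) := by
    rw [mul_assoc, mul_assoc]
    exact mul_le_mul_of_nonneg_right h2m (le_of_lt (mul_pos htp1 hB'pos))
  have hstep3 : 2^m * t^(1-p) * (ff2 t - t^(p-1)) ≤ 2^m * t^(1-p) *
      (ff2 t + S * gg2 p t - (2 * gg1 p t)^2 * S / (2 * gg p t)) := by
    have h0 : (0:ℝ) ≤ 2^m * t^(1-p) := by positivity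
    exact mul_le_mul_of_nonneg_left hB h0
  linarith

lemma boundary_est (p t S : ℝ) (hp0 : 0 < p)
    (ht0 : 0 < t) (hte : t ≤ Real.exp (-1))
    (hA : 3 * (Real.log t)^2 * t ^ p < 1) (hS0 : 0 ≤ S) (hSt : S ≤ t) :
    (1/2) * (t / (-Real.log t)) + S * t ^ p ≤ t / (-Real.log t) := by
  have hL1 : 1 ≤ -Real.log t := by
    have := Real.log_le_log ht0 hte
    rw [Real.log_exp] at this
    linarith
  set L : ℝ := -Real.log t with hL
  have hL0 : 0 < L := lt_of_lt_of_le one_pos hL1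
  have htp : (0:ℝ) < t ^ p := Real.rpow_pos_of_pos ht0 _
  have hlog2 : (Real.log t)^2 = L^2 := by rw [hL]; ring
  rw [hlog2] at hA
  have h1 : 2 * L * t^p ≤ 3 * L^2 * t^p := by
    have h0 : 2 * L ≤ 3 * L^2 := by nlinarith
    exact mul_le_mul_of_nonneg_right h0 htp.le
  have h2 : 2 * L * t^p < 1 := lt_of_le_of_lt h1 hA
  have h3 : S * t^p ≤ t * t^p := by nlinarith
  have h4 : t * (2 * L * t^p) ≤ t * 1 := by nlinarith
  -- so S * t^p ≤ t/(2L)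
  have h5 : S * t^p ≤ t / (2*L) := by
    rw [le_div_iff₀ (by positivity : (0:ℝ) < 2*L)]
    nlinarith
  have h6 : t / (2*L) = (1/2) * (t/L) := by
    field_simp
  linarith [h5, h6.le]

lemma exists_rho (p : ℝ) (hp0 : 0 < p) :
    ∃ ρ₀ : ℝ, 0 < ρ₀ ∧ ρ₀ < 1/2 ∧ 2*ρ₀ ≤ Real.exp (-1) ∧
      ∀ t : ℝ, 0 < t → t ≤ 2*ρ₀ → 3 * (Real.log t)^2 * t^p < 1 := by
  have htend := tendsto_log_mul_rpow_nhdsGT_zero (by positivity : 0 < p/2)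
  have h2 : ∀ᶠ y in nhds (0:ℝ), |y| < 1/2 := by
    filter_upwards [Metric.ball_mem_nhds (0:ℝ) (by norm_num : (0:ℝ) < 1/2)] with y hy
    simpa [Real.dist_eq] using hy
  have hev : ∀ᶠ x in nhdsWithin 0 (Set.Ioi (0:ℝ)), |Real.log x * x^(p/2)| < 1/2 :=
    htend.eventually h2
  rw [eventually_nhdsWithin_iff] at hev
  obtain ⟨ε, hε, hball⟩ := Metric.eventually_nhds_iff.mp hev
  refine ⟨min (ε/4) (Real.exp (-1)/2), by positivity, ?_, ?_, ?_⟩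
  · have : Real.exp (-1) < 1 := by
      rw [← Real.exp_zero]
      exact Real.exp_lt_exp.mpr (by norm_num)
    calc min (ε/4) (Real.exp (-1)/2) ≤ Real.exp (-1)/2 := min_le_right _ _
    _ < 1/2 := by linarith
  · calc 2 * min (ε/4) (Real.exp (-1)/2) ≤ 2 * (Real.exp (-1)/2) := by
          have := min_le_right (ε/4) (Real.exp (-1)/2)
          linarith
    _ = Real.exp (-1) := by ring
  · intro t ht0 htle
    have htε : dist t 0 < ε := by
      rw [Real.dist_eq, sub_zero, abs_of_pos ht0]
      have h1 : 2 * min (ε/4) (Real.exp (-1)/2) ≤ 2 * (ε/4) := by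
        have := min_le_left (ε/4) (Real.exp (-1)/2)
        linarith
      linarith
    have hy := hball htε ht0
    have hsq : (Real.log t * t^(p/2))^2 = (Real.log t)^2 * t^p := by
      rw [mul_pow, ← Real.rpow_natCast (t^(p/2)) 2, ← Real.rpow_mul ht0.le]
      norm_num
    have h4 : (Real.log t * t^(p/2))^2 < 1/4 := by
      rw [← sq_abs]
      nlinarith [abs_nonneg (Real.log t * t^(p/2))]
    rw [hsq] at h4
    linarith

lemma exp_neg_one_le_one : Real.exp (-1) ≤ 1 := by
  rw [← Real.exp_zero]
  exact (Real.exp_le_exp.mpr (by norm_num))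

lemma dist_sq_eq (m : ℕ) (ρ : ℝ) (x : E m) :
    (dist x (EuclideanSpace.single (kk m) ρ))^2 = SS m x + (x (kk m) - ρ)^2 := by
  rw [EuclideanSpace.dist_eq, Real.sq_sqrt (by positivity)]
  rw [Fin.sum_univ_castSucc]
  congr 1
  · rw [SS]
    refine Finset.sum_congr rfl fun r _ => ?_
    rw [EuclideanSpace.single_apply,
      if_neg (ne_of_lt (Fin.castSucc_lt_last r) : (r.castSucc : Fin (m+1)) ≠ kk m),
      Real.dist_eq, sub_zero, sq_abs]
  · rw [EuclideanSpace.single_apply]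
    have hc : (if Fin.last m = kk m then ρ else (0:ℝ)) = ρ := if_pos rfl
    rw [hc, Real.dist_eq, sq_abs]
    rfl

lemma norm_projE_sq (m : ℕ) (z : E m) : ‖projE z‖^2 = SS m z := by
  rw [EuclideanSpace.norm_eq, Real.sq_sqrt (by positivity)]
  rw [SS]
  refine Finset.sum_congr rfl fun i _ => ?_
  have h : projE z i = z i.castSucc := rfl
  rw [h, Real.norm_eq_abs, sq_abs]

end BarrierAux

/-- the explicit barrier `w(x) = (1/2)·xₙ/(−log xₙ) + |x'|² xₙ^{1/n}`
satisfies `det D²w > 1` in `Ω = B(ρeₙ, ρ)` and `w ≤ xₙ/(−log xₙ)` on `∂Ω ∩ {xₙ > 0}`,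
for all small `ρ` depending only on `n`. -/
theorem barrier_log_example
    (n : ℕ) (hn : 2 ≤ n) :
    ∃ ρ₀ : ℝ, 0 < ρ₀ ∧ ρ₀ < 1 / 2 ∧
      ∀ ρ : ℝ, 0 < ρ → ρ ≤ ρ₀ →
        (∀ x ∈ ball (EuclideanSpace.single (⟨n - 1, by omega⟩ : Fin n) ρ) ρ,
          1 < mongeDet (fun z => (1 / 2) * (lastC hn z / (-Real.log (lastC hn z))) +
            ‖projE z‖ ^ 2 * lastC hn z ^ ((1 : ℝ) / n)) x) ∧
        (∀ x ∈ frontier (ball (EuclideanSpace.single (⟨n - 1, by omega⟩ : Fin n) ρ) ρ),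
          0 < lastC hn x →
          (1 / 2) * (lastC hn x / (-Real.log (lastC hn x))) +
              ‖projE x‖ ^ 2 * lastC hn x ^ ((1 : ℝ) / n) ≤
            lastC hn x / (-Real.log (lastC hn x))) := by
  obtain ⟨m, rfl⟩ : ∃ m, n = m + 1 := ⟨n - 1, by omega⟩
  have hm : 1 ≤ m := by omega
  set p : ℝ := (1 : ℝ) / ((m+1 : ℕ) : ℝ) with hp
  have hcast : ((m+1 : ℕ) : ℝ) = (m : ℝ) + 1 := by push_cast; ring
  have hmcast : (1 : ℝ) ≤ (m : ℝ) := by exact_mod_cast hm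
  have hp0 : 0 < p := by rw [hp, hcast]; positivity
  have hp2 : p ≤ 1/2 := by
    rw [hp, hcast, div_le_div_iff₀ (by linarith) (by norm_num)]
    linarith
  have hpm : p * m = 1 - p := by
    rw [hp, hcast]
    field_simp
    ring
  have hexp1 : Real.exp (-1) ≤ 1 := exp_neg_one_le_one
  obtain ⟨ρ₀, h1, h2, h3, h4⟩ := exists_rho p hp0
  refine ⟨ρ₀, h1, h2, fun ρ hρ0 hρρ₀ => ?_⟩
  have hrw : (fun z : E m => (1 / 2) * (lastC hn z / (-Real.log (lastC hn z))) +
      ‖projE z‖ ^ 2 * lastC hn z ^ p) = W m p := by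
    funext z
    have hl : lastC hn z = z (kk m) := rfl
    rw [hl, norm_projE_sq m z, W, ff, gg]
  constructor
  · intro x hx
    rw [Metric.mem_ball] at hx
    have hx' : dist x (EuclideanSpace.single (kk m) ρ) < ρ := hx
    have hd2 : SS m x + (x (kk m) - ρ)^2 < ρ^2 := by
      rw [← dist_sq_eq m ρ x]
      exact pow_lt_pow_left₀ hx' dist_nonneg (by norm_num)
    have hS0 : 0 ≤ SS m x := Finset.sum_nonneg fun i _ => sq_nonneg _
    set t := x (kk m) with htdef
    have ht0 : 0 < t := by nlinarith
    have ht2ρ : t < 2*ρ := by nlinarith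
    have hte : t ≤ Real.exp (-1) := by linarith
    have hSt : SS m x ≤ t := by nlinarith
    have hA := h4 t ht0 (by linarith)
    have ht1 : t < 1 := by
      calc t ≤ Real.exp (-1) := hte
      _ < 1 := by
        rw [← Real.exp_zero]
        exact Real.exp_lt_exp.mpr (by norm_num)
    rw [hrw]
    have hmonge : mongeDet (W m p) x = (Hmat m p x).det := by
      rw [mongeDet]
      congr 1
      ext i j
      exact entry_eq m p x ht0 ht1 i j
    rw [hmonge, det_Hmat m p x (ne_of_gt (Real.rpow_pos_of_pos ht0 p))]
    exact interior_est m hm p t (SS m x) hp0 hp2 hpm ht0 hte hA hS0 hSt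
  · intro x hx ht0'
    rw [frontier_ball _ (ne_of_gt hρ0)] at hx
    have hx' : dist x (EuclideanSpace.single (kk m) ρ) = ρ := hx
    have hd2 : SS m x + (x (kk m) - ρ)^2 = ρ^2 := by
      rw [← dist_sq_eq m ρ x, hx']
    have hS0 : 0 ≤ SS m x := Finset.sum_nonneg fun i _ => sq_nonneg _
    set t := x (kk m) with htdef
    have ht0 : 0 < t := ht0'
    have ht2ρ : t ≤ 2*ρ := by nlinarith
    have hte : t ≤ Real.exp (-1) := by linarith
    have hSt : SS m x ≤ t := by nlinarith
    have hA := h4 t ht0 (by linarith)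
    have hnorm : ‖projE x‖^2 = SS m x := norm_projE_sq m x
    rw [hnorm]
    exact boundary_est p t (SS m x) hp0 ht0 hte hA hS0 hSt
end
end

section
/- Let n ≥ 2, α ∈ (0,1), L, K > 0. Let u : closure(B₁⁺) → ℝ be convex, Lipschitz with constant L, differentiable in B₁⁺, with u(0) = 0, and suppose b ∈ ℝⁿ satisfies u(x) ≥ b·x for all x ∈ closure(B₁⁺) (b is a supporting slope at 0) and u(x', 0) − b'·x' ≤ K|x'|^{1+α} for all |x'| ≤ 1, where b' = (b₁, …, b_{n−1}). Then there exists C > 0 depending only on n, α, L, K and |b| such that |∇_{x'}u(y) − b'| ≤ C|y|^{α/2} for every y ∈ B₁⁺, where ∇_{x'}u denotes the first n−1 components of the gradient of u. -/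
open scoped RealInnerProductSpace
open Metric Set MeasureTheory

noncomputable section

set_option linter.unusedVariables false

/-- The half ball `B_r⁺ = {|x| < r, xₙ > 0}` in `ℝⁿ`. -/
def BplusR (n : ℕ) (hn : 2 ≤ n) (r : ℝ) : Set (EuclideanSpace ℝ (Fin n)) :=
  {x | ‖x‖ < r ∧ 0 < x ⟨n - 1, by omega⟩}

variable {m : ℕ}

lemma inner_embE (w : EuclideanSpace ℝ (Fin (m + 2))) (x' : EuclideanSpace ℝ (Fin (m + 2 - 1))) :
    ⟪w, embE x'⟫ = ⟪projE w, x'⟫ := by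
  simp only [PiLp.inner_apply, RCLike.inner_apply, conj_trivial]
  rw [Fin.sum_univ_castSucc]
  simp [embE, projE, Fin.castSucc, Fin.castLE, Fin.last]
  exact Finset.sum_congr rfl fun i _ => by rw [if_pos (by have := i.isLt; omega)]; rfl

lemma norm_embE (x' : EuclideanSpace ℝ (Fin (m + 2 - 1))) : ‖(embE x' : EuclideanSpace ℝ (Fin (m+2)))‖ = ‖x'‖ := by
  simp only [EuclideanSpace.norm_eq]
  congr 1
  rw [Fin.sum_univ_castSucc]
  simp [embE, Fin.castSucc, Fin.last]
  exact Finset.sum_congr rfl fun i _ => by rw [if_pos (by have := i.isLt; omega)]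

lemma norm_projE_le (x : EuclideanSpace ℝ (Fin (m + 2))) : ‖projE x‖ ≤ ‖x‖ := by
  simp only [EuclideanSpace.norm_eq]
  apply Real.sqrt_le_sqrt
  have key : ∑ i : Fin (m+1), ‖x (Fin.castSucc i)‖^2 ≤ ∑ j : Fin (m+2), ‖x j‖^2 := by
    have e1 : ∑ i : Fin (m+1), ‖x (Fin.castSucc i)‖^2
        = ∑ j ∈ Finset.univ.map Fin.castSuccEmb, ‖x j‖^2 :=
      (Finset.sum_map Finset.univ Fin.castSuccEmb (fun j => ‖x j‖^2)).symm
    rw [e1]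
    exact Finset.sum_le_sum_of_subset_of_nonneg (Finset.subset_univ _) (by intros; positivity)
  exact le_trans (le_of_eq (Finset.sum_congr rfl fun i _ => rfl)) key

lemma abs_coord_le_norm (x : EuclideanSpace ℝ (Fin (m+2))) (i : Fin (m+2)) : |x i| ≤ ‖x‖ := by
  have := EuclideanSpace.norm_single (𝕜 := ℝ) i (1:ℝ)
  have h := abs_real_inner_le_norm x (EuclideanSpace.single i (1:ℝ))
  rw [EuclideanSpace.inner_single_right] at h
  simpa [this] using h

lemma isOpen_Bplus (hn : 2 ≤ m + 2) : IsOpen (BplusR (m+2) hn 1) := by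
  apply IsOpen.inter (s := {x : EuclideanSpace ℝ (Fin (m+2)) | ‖x‖ < 1})
    (t := {x : EuclideanSpace ℝ (Fin (m+2)) | 0 < x ⟨m+1, by omega⟩})
  · exact isOpen_lt continuous_norm continuous_const
  · exact isOpen_lt continuous_const (by fun_prop)

lemma convex_Bplus (hn : 2 ≤ m + 2) : Convex ℝ (BplusR (m+2) hn 1) := by
  apply Convex.inter (s := {x : EuclideanSpace ℝ (Fin (m+2)) | ‖x‖ < 1})
    (t := {x : EuclideanSpace ℝ (Fin (m+2)) | 0 < x ⟨m+1, by omega⟩})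
  · have : {x : EuclideanSpace ℝ (Fin (m+2)) | ‖x‖ < 1} = ball 0 1 := by
      ext x; simp [dist_eq_norm]
    rw [this]; exact convex_ball 0 1
  · exact convex_halfSpace_gt (f := fun x : EuclideanSpace ℝ (Fin (m+2)) => x ⟨m+1, by omega⟩) ⟨fun a b => rfl, fun c a => rfl⟩ 0

lemma closure_Bplus (hn : 2 ≤ m + 2) :
    closure (BplusR (m+2) hn 1)
      = {x : EuclideanSpace ℝ (Fin (m+2)) | ‖x‖ ≤ 1 ∧ 0 ≤ x ⟨m+1, by omega⟩} := by
  apply Subset.antisymm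
  · apply closure_minimal
    · intro x hx
      exact ⟨hx.1.le, hx.2.le⟩
    · exact IsClosed.inter (isClosed_le continuous_norm continuous_const)
        (isClosed_le continuous_const (by fun_prop : Continuous fun x : EuclideanSpace ℝ (Fin (m+2)) => x ⟨m+1, by omega⟩))
  · intro x hx
    rw [mem_closure_iff_seq_limit]
    set p : EuclideanSpace ℝ (Fin (m+2)) := EuclideanSpace.single ⟨m+1, by omega⟩ (1/2 : ℝ) with hp
    have hpn : ‖p‖ = 1/2 := by rw [hp, EuclideanSpace.norm_single]; norm_num
    have hpi : p ⟨m+1, by omega⟩ = 1/2 := by rw [hp]; simp [EuclideanSpace.single_apply]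
    refine ⟨fun k => (1 - 1/(k+1 : ℝ)) • x + (1/(k+1 : ℝ)) • p, fun k => ?_, ?_⟩
    · have hk0 : 0 < 1/(k+1 : ℝ) := by positivity
      have hk1 : 1/(k+1 : ℝ) ≤ 1 := by
        rw [div_le_one (by positivity)]; norm_num
      constructor
      · calc ‖(1 - 1/(k+1 : ℝ)) • x + (1/(k+1 : ℝ)) • p‖
            ≤ ‖(1 - 1/(k+1 : ℝ)) • x‖ + ‖(1/(k+1 : ℝ)) • p‖ := norm_add_le _ _
          _ = (1 - 1/(k+1 : ℝ)) * ‖x‖ + (1/(k+1 : ℝ)) * ‖p‖ := by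
              rw [norm_smul, norm_smul, Real.norm_eq_abs, Real.norm_eq_abs,
                abs_of_nonneg (by linarith), abs_of_nonneg hk0.le]
          _ ≤ (1 - 1/(k+1 : ℝ)) * 1 + (1/(k+1 : ℝ)) * (1/2) := by
              gcongr
              · exact hx.1
              · rw [hpn]
          _ < 1 := by nlinarith
      · show 0 < ((1 - 1/(k+1 : ℝ)) • x + (1/(k+1 : ℝ)) • p) ⟨m+1, by omega⟩
        have : ((1 - 1/(k+1 : ℝ)) • x + (1/(k+1 : ℝ)) • p) ⟨m+1, by omega⟩
            = (1 - 1/(k+1 : ℝ)) * x ⟨m+1, by omega⟩ + (1/(k+1 : ℝ)) * p ⟨m+1, by omega⟩ := rfl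
        rw [this, hpi]
        have := hx.2
        nlinarith
    · have h0 : Filter.Tendsto (fun k : ℕ => 1/(k+1 : ℝ)) Filter.atTop (nhds 0) :=
        tendsto_one_div_add_atTop_nhds_zero_nat
      have hconv : Filter.Tendsto (fun k : ℕ => (1 - 1/(k+1:ℝ)) • x + (1/(k+1:ℝ)) • p)
          Filter.atTop (nhds (((1:ℝ) - 0) • x + (0:ℝ) • p)) :=
        (((tendsto_const_nhds (x := (1:ℝ))).sub h0).smul (tendsto_const_nhds (x := x))).add
          (h0.smul (tendsto_const_nhds (x := p)))
      simpa using hconv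

lemma subgrad {E : Type*} [NormedAddCommGroup E] [InnerProductSpace ℝ E]
    {s : Set E} {f : E → ℝ} (hf : ConvexOn ℝ s f) {y w : E}
    (hy : y ∈ s) (hyw : y + w ∈ s) (hd : DifferentiableAt ℝ f y) :
    fderiv ℝ f y w ≤ f (y + w) - f y := by
  have hline : HasDerivAt (fun t : ℝ => y + t • w) w 0 := by
    simpa using ((hasDerivAt_id (0:ℝ)).smul_const w).const_add y
  have h0 : y + (0:ℝ) • w = y := by simp
  have hg : HasDerivAt (fun t : ℝ => f (y + t • w)) (fderiv ℝ f y w) 0 := by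
    have hF : HasFDerivAt f (fderiv ℝ f y) (y + (0:ℝ) • w) := by
      rw [h0]; exact hd.hasFDerivAt
    exact hF.comp_hasDerivAt 0 hline
  rw [hasDerivAt_iff_tendsto_slope] at hg
  have hg' : Filter.Tendsto (slope (fun t : ℝ => f (y + t • w)) 0) (nhdsWithin 0 (Ioi 0))
      (nhds (fderiv ℝ f y w)) :=
    hg.mono_left (nhdsWithin_mono 0 (fun t ht => ne_of_gt ht))
  refine le_of_tendsto hg' ?_
  filter_upwards [Ioc_mem_nhdsGT_of_mem (by constructor <;> norm_num : (0:ℝ) ∈ Ico 0 1)]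
    with t ht
  have ht0 : 0 < t := ht.1
  have hcomb : y + t • w = (1-t) • y + t • (y + w) := by module
  have hcv := hf.2 hy hyw (by linarith [ht.2] : (0:ℝ) ≤ 1 - t) ht0.le (by ring)
  rw [← hcomb] at hcv
  rw [slope_def_field]
  simp only [sub_zero, h0]
  rw [div_le_iff₀ ht0]
  simp only [smul_eq_mul] at hcv
  nlinarith [hcv]

set_option maxHeartbeats 1000000 in
/-- tangential gradient estimate: if the boundary values on `{xₙ = 0}`
separate at most like `K|x'|^{1+α}` from the supporting slope `b` at `0`, then
`|∇_{x'}u(y) − b'| ≤ C|y|^{α/2}` in `B₁⁺`. -/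
theorem tangential_gradient_estimate_flat
    (n : ℕ) (hn : 2 ≤ n) (a L K Mb : ℝ)
    (ha0 : 0 < a) (ha1 : a < 1) (hL : 0 < L) (hK : 0 < K) (hMb : 0 ≤ Mb) :
    ∃ C > 0,
      ∀ (u : EuclideanSpace ℝ (Fin n) → ℝ) (b : EuclideanSpace ℝ (Fin n)),
        ConvexOn ℝ (closure (BplusR n hn 1)) u →
        (∀ x ∈ closure (BplusR n hn 1), ∀ y ∈ closure (BplusR n hn 1),
          |u x - u y| ≤ L * ‖x - y‖) →
        DifferentiableOn ℝ u (BplusR n hn 1) →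
        u 0 = 0 →
        (∀ x ∈ closure (BplusR n hn 1), ⟪b, x⟫ ≤ u x) →
        ‖b‖ ≤ Mb →
        (∀ x' : EuclideanSpace ℝ (Fin (n - 1)), ‖x'‖ ≤ 1 →
          u (embE x') - ⟪projE b, x'⟫ ≤ K * ‖x'‖ ^ (1 + a)) →
        ∀ y ∈ BplusR n hn 1,
          ‖projE (gradient u y) - projE b‖ ≤ C * ‖y‖ ^ (a / 2) := by
  obtain ⟨m, rfl⟩ : ∃ m, n = m + 2 := ⟨n - 2, by omega⟩
  refine ⟨4*K + 2*(L+Mb) + 1, by positivity, ?_⟩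
  intro u b hconv hlip hdiff hu0 hsupp hbnorm hbdry y hy
  set S := BplusR (m+2) hn 1 with hSdef
  have hSopen : IsOpen S := isOpen_Bplus hn
  have hclos := closure_Bplus (m := m) hn
  have hyS : y ∈ S := hy
  have hyc : y ∈ closure S := subset_closure hyS
  have hdy : DifferentiableAt ℝ u y := hdiff.differentiableAt (hSopen.mem_nhds hyS)
  set g := gradient u y with hgdef
  have hginner : ∀ v : EuclideanSpace ℝ (Fin (m+2)), ⟪g, v⟫ = fderiv ℝ u y v :=
    fun v => InnerProductSpace.toDual_symm_apply
  have hgnorm : ‖g‖ ≤ L := by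
    have hlipOn : LipschitzOnWith (⟨L, hL.le⟩ : NNReal) u (closure S) := by
      refine LipschitzOnWith.of_dist_le_mul ?_
      intro x hx z hz
      rw [Real.dist_eq, dist_eq_norm]
      exact hlip x hx z hz
    have h1 : ‖fderiv ℝ u y‖ ≤ L :=
      hdy.hasFDerivAt.le_of_lipschitzOn
        (Filter.mem_of_superset (hSopen.mem_nhds hyS) subset_closure) hlipOn
    have h2 : ‖g‖ = ‖fderiv ℝ u y‖ :=
      (InnerProductSpace.toDual ℝ (EuclideanSpace ℝ (Fin (m+2)))).symm.norm_map (fderiv ℝ u y)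
    rw [h2]; exact h1
  set r := ‖y‖ with hrdef
  have hylast : 0 < y ⟨m+1, by omega⟩ := hy.2
  have hr1 : r < 1 := hy.1
  have hr0 : 0 < r := by
    rw [hrdef, norm_pos_iff]
    intro h
    rw [h] at hylast
    exact lt_irrefl 0 (by simpa using hylast)
  have hpgb : projE g - projE b = projE (g - b) := by
    rfl
  have hCnn : (0:ℝ) ≤ r ^ (a/2) := Real.rpow_nonneg hr0.le _
  by_cases hr4 : r ≤ 1/4
  · -- small radius case
    have key : ∀ e' : EuclideanSpace ℝ (Fin (m+2-1)), ‖e'‖ = 1 →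
        ⟪projE g - projE b, e'⟫ ≤ (4*K + L + Mb) * r ^ (a/2) := by
      intro e' he'
      set t := Real.sqrt r with htdef
      have ht0 : 0 < t := Real.sqrt_pos.2 hr0
      have ht2 : t * t = r := Real.mul_self_sqrt hr0.le
      have hth : t ≤ 1/2 := by
        rw [htdef, show (1:ℝ)/2 = Real.sqrt (1/4) by
          rw [show (1/4:ℝ) = (1/2)^2 by norm_num, Real.sqrt_sq (by norm_num)]]
        exact Real.sqrt_le_sqrt hr4
      set e : EuclideanSpace ℝ (Fin (m+2)) := embE e' with hedef
      have hen : ‖e‖ = 1 := by rw [hedef, norm_embE, he']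
      have helast : e ⟨m+1, by omega⟩ = 0 := by
        rw [hedef]; show (embE e' : EuclideanSpace ℝ (Fin (m+2))) ⟨m+1, by omega⟩ = 0
        simp only [embE]
        rw [dif_neg (by omega)]
      have hywS : y + t • e ∈ S := by
        constructor
        · calc ‖y + t•e‖ ≤ ‖y‖ + ‖t•e‖ := norm_add_le _ _
            _ = r + |t| * ‖e‖ := by rw [norm_smul, Real.norm_eq_abs, ← hrdef]
            _ = r + t := by rw [hen, abs_of_nonneg ht0.le, mul_one]
            _ < 1 := by linarith
        · show 0 < (y + t•e) ⟨m+1, by omega⟩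
          have heval : (y + t • e) ⟨m+1, by omega⟩
              = y ⟨m+1, by omega⟩ + t * e ⟨m+1, by omega⟩ := rfl
          rw [heval, helast]
          linarith
      have hsub : fderiv ℝ u y (t • e) ≤ u (y + t•e) - u y :=
        subgrad hconv hyc (subset_closure hywS) hdy
      have hsub' : t * ⟪g, e⟫ ≤ u (y + t•e) - u y := by
        calc t * ⟪g,e⟫ = ⟪g, t•e⟫ := (real_inner_smul_right g e t).symm
          _ = fderiv ℝ u y (t•e) := hginner _
          _ ≤ _ := hsub
      set p' := projE y + t • e' with hp'def
      have hp'norm : ‖p'‖ ≤ r + t := by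
        calc ‖p'‖ ≤ ‖projE y‖ + ‖t•e'‖ := norm_add_le _ _
          _ ≤ r + t := by
            rw [norm_smul, Real.norm_eq_abs, abs_of_nonneg ht0.le, he', mul_one]
            exact add_le_add (norm_projE_le y) le_rfl
      have hp'1 : ‖p'‖ ≤ 1 := by linarith
      have hemblast : (embE p' : EuclideanSpace ℝ (Fin (m+2))) ⟨m+1, by omega⟩ = 0 := by
        simp only [embE]
        rw [dif_neg (by omega)]
      have hembc : embE p' ∈ closure S := by
        rw [hclos]
        refine ⟨by rw [norm_embE]; exact hp'1, ?_⟩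
        rw [hemblast]
      have hvec : (y + t•e) - embE p'
          = EuclideanSpace.single (⟨m+1, by omega⟩ : Fin (m+2)) (y ⟨m+1, by omega⟩) := by
        ext j
        by_cases hj : (j : ℕ) < m+1
        · have hij : j ≠ ⟨m+1, by omega⟩ := by
            intro hh
            rw [hh] at hj
            simp at hj
          show (y j + t * e j) - embE p' j = _
          rw [EuclideanSpace.single_apply, if_neg hij]
          have h1 : e j = e' ⟨j, hj⟩ := by rw [hedef]; exact dif_pos hj
          have h2 : (embE p' : EuclideanSpace ℝ (Fin (m+2))) j = p' ⟨j, hj⟩ := dif_pos hj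
          have h3 : p' ⟨j, hj⟩ = projE y ⟨j, hj⟩ + t * e' ⟨j, hj⟩ := rfl
          have h4 : projE y ⟨j, hj⟩ = y j := rfl
          rw [h1, h2, h3, h4]
          ring
        · have hj2 : (j:ℕ) = m+1 := by omega
          have hj' : j = ⟨m+1, by omega⟩ := Fin.ext hj2
          rw [hj']
          show (y _ + t * e _) - embE p' _ = _
          rw [EuclideanSpace.single_apply, if_pos rfl, helast, hemblast]
          ring
      have hlip2 : |u (y + t•e) - u (embE p')| ≤ L * r := by
        have h1 := hlip (y + t•e) (subset_closure hywS) (embE p') hembc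
        have h2 : ‖(y + t•e) - embE p'‖ = |y ⟨m+1, by omega⟩| := by
          rw [hvec]
          exact EuclideanSpace.norm_single _ _
        have h3 : |y ⟨m+1, by omega⟩| ≤ r := abs_coord_le_norm y _
        calc |u (y + t•e) - u (embE p')| ≤ L * ‖(y + t•e) - embE p'‖ := h1
          _ = L * |y ⟨m+1, by omega⟩| := by rw [h2]
          _ ≤ L * r := by gcongr
      have hbdry' := hbdry p' hp'1
      have hembeq : (embE p' : EuclideanSpace ℝ (Fin (m+2)))
          = (y + t•e) - EuclideanSpace.single (⟨m+1, by omega⟩ : Fin (m+2)) (y ⟨m+1, by omega⟩) := by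
        rw [← hvec]; abel
      have hib : ⟪projE b, p'⟫ = ⟪b, y + t•e⟫ - b ⟨m+1, by omega⟩ * y ⟨m+1, by omega⟩ := by
        rw [← inner_embE b p', hembeq, inner_sub_right]
        congr 1
        rw [EuclideanSpace.inner_single_right]
        simp [mul_comm]
      have hby : ⟪b, y + t•e⟫ = ⟪b, y⟫ + t * ⟪b, e⟫ := by
        rw [inner_add_right, real_inner_smul_right]
      have hsupy : ⟪b, y⟫ ≤ u y := hsupp y hyc
      have hblast : |b ⟨m+1, by omega⟩| ≤ Mb := le_trans (abs_coord_le_norm b _) hbnorm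
      have hylr : |y ⟨m+1, by omega⟩| ≤ r := abs_coord_le_norm y _
      have hcross : - (b ⟨m+1, by omega⟩ * y ⟨m+1, by omega⟩) ≤ Mb * r := by
        have habs : |b ⟨m+1, by omega⟩ * y ⟨m+1, by omega⟩| ≤ Mb * r := by
          rw [abs_mul]
          exact mul_le_mul hblast hylr (abs_nonneg _) hMb
        linarith [neg_abs_le (b ⟨m+1, by omega⟩ * y ⟨m+1, by omega⟩)]
      have hmain : t * ⟪g - b, e⟫ ≤ K * ‖p'‖^(1+a) + (L + Mb) * r := by
        have e1 : ⟪g - b, e⟫ = ⟪g,e⟫ - ⟪b,e⟫ := inner_sub_left g b e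
        have labs := abs_le.1 hlip2
        rw [e1, mul_sub]
        linarith [hsub', labs.2, hbdry', hib, hby, hsupy, hcross]
      have hpf : ⟪projE g - projE b, e'⟫ = ⟪g - b, e⟫ := by
        rw [hpgb, hedef]
        exact (inner_embE (g-b) e').symm
      have hK1 : K * ‖p'‖^(1+a) ≤ K * (4 * (t * t^a)) := by
        have hle : ‖p'‖ ≤ 2*t := by nlinarith [hp'norm, ht2, hth, ht0]
        have h1 : ‖p'‖^(1+a) ≤ (2*t)^(1+a) := Real.rpow_le_rpow (norm_nonneg _) hle (by linarith)
        have h2 : (2*t)^(1+a) = 2^(1+a) * t^(1+a) := Real.mul_rpow (by norm_num) ht0.le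
        have h3 : (2:ℝ)^(1+a) ≤ 4 := by
          have h3a : (2:ℝ)^(1+a) ≤ 2^(2:ℝ) :=
            Real.rpow_le_rpow_of_exponent_le (by norm_num) (by linarith)
          have h3b : (2:ℝ)^(2:ℝ) = 4 := by
            rw [show (2:ℝ) = ((2:ℕ):ℝ) by norm_num, Real.rpow_natCast]
            norm_num
          linarith
        have h5 : t^(1+a) = t * t^a := by
          rw [Real.rpow_add ht0, Real.rpow_one]
        have h6 : (0:ℝ) ≤ t^(1+a) := Real.rpow_nonneg ht0.le _
        calc K * ‖p'‖^(1+a) ≤ K * (2^(1+a) * t^(1+a)) := by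
              rw [← h2]; exact mul_le_mul_of_nonneg_left h1 hK.le
          _ ≤ K * (4 * (t * t^a)) := by
              rw [← h5]
              exact mul_le_mul_of_nonneg_left (mul_le_mul_of_nonneg_right h3 h6) hK.le
      have hta : t^a = r^(a/2) := by
        rw [htdef, Real.sqrt_eq_rpow, ← Real.rpow_mul hr0.le]
        congr 1; ring
      have htta : t ≤ t^a := by
        have := Real.rpow_le_rpow_of_exponent_ge ht0 (by linarith : t ≤ 1) ha1.le
        rwa [Real.rpow_one] at this
      rw [← ht2] at hmain
      have hfin : t * ⟪projE g - projE b, e'⟫ ≤ t * ((4*K + L + Mb) * t^a) := by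
        rw [hpf]
        have prod : (0:ℝ) ≤ (L+Mb)*t*(t^a - t) :=
          mul_nonneg (mul_nonneg (by linarith) ht0.le) (by linarith)
        linarith [hmain, hK1, prod]
      have hres := le_of_mul_le_mul_left hfin ht0
      rw [hta] at hres
      exact hres
    rcases eq_or_ne (projE g - projE b) 0 with hv | hv
    · rw [hv, norm_zero]; positivity
    · set v := projE g - projE b with hvdef
      have he' : ‖‖v‖⁻¹ • v‖ = 1 := norm_smul_inv_norm hv
      have hkey := key (‖v‖⁻¹ • v) he'
      have hvv : ⟪v, ‖v‖⁻¹ • v⟫ = ‖v‖ := by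
        rw [real_inner_smul_right, real_inner_self_eq_norm_mul_norm]
        have : ‖v‖ ≠ 0 := norm_ne_zero_iff.2 hv
        field_simp
      rw [hvv] at hkey
      calc ‖v‖ ≤ (4*K + L + Mb) * r^(a/2) := hkey
        _ ≤ (4*K + 2*(L+Mb) + 1) * r^(a/2) := by
            apply mul_le_mul_of_nonneg_right _ hCnn
            linarith
  · push_neg at hr4
    have h1 : ‖projE g - projE b‖ ≤ L + Mb := by
      rw [hpgb]
      calc ‖projE (g - b)‖ ≤ ‖g - b‖ := norm_projE_le _
        _ ≤ ‖g‖ + ‖b‖ := norm_sub_le _ _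
        _ ≤ L + Mb := add_le_add hgnorm hbnorm
    have h2 : (1:ℝ)/2 ≤ r^(a/2) := by
      have hA : r^((1:ℝ)/2) ≤ r^(a/2) :=
        Real.rpow_le_rpow_of_exponent_ge hr0 hr1.le (by linarith)
      have hB : ((1:ℝ)/4)^((1:ℝ)/2) ≤ r^((1:ℝ)/2) :=
        Real.rpow_le_rpow (by norm_num) hr4.le (by norm_num)
      have hC : ((1:ℝ)/4)^((1:ℝ)/2) = 1/2 := by
        rw [← Real.sqrt_eq_rpow, show (1/4:ℝ) = (1/2)^2 by norm_num,
          Real.sqrt_sq (by norm_num)]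
      linarith
    have hfinal : L + Mb ≤ (4*K + 2*(L+Mb) + 1) * r^(a/2) := by
      nlinarith [h2, hK.le, hL.le, hMb, hCnn]
    linarith
end
end
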